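/- Let m, n be natural numbers and let p, p' : Fin m → ℚ and q, q' : Fin n → ℚ all be nonincreasing (i.e. slope tuples of concave rationally tuplar polygons). If p ≥ p' and q ≥ q' in the Bruhat order, then p ⊕ q ≥ p' ⊕ q' in the Bruhat order, where ⊕ denotes the direct sum of rationally tuplar polygons. -/

import Mathlib

open Finset

/-- Partial sum of the first `j` slopes of a rationally tuplar polygon. -/
def psum {n : ℕ} (s : Fin n → ℚ) (j : ℕ) : ℚ :=
  ∑ i : Fin n, if (i : ℕ) < j then s i else 0

/-- Bruhat order: `s ≥ t`, i.e. all partial sums of `s` dominate those of `t`,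
with equality of total sums. -/
def BruhatGE {n : ℕ} (s t : Fin n → ℚ) : Prop :=
  (∀ j : ℕ, 1 ≤ j → j ≤ n → psum t j ≤ psum s j) ∧ (∑ i, t i) = (∑ i, s i)

/-- `splus` is the concave rearrangement of `s`: a nonincreasing rearrangement. -/
def IsConcaveRearr {n : ℕ} (s splus : Fin n → ℚ) : Prop :=
  (∃ σ : Equiv.Perm (Fin n), splus = s ∘ σ) ∧ Antitone splus

/-- `u` is the direct sum `s ⊕ t`: the concave rearrangement of the concatenation. -/
def IsDSum {m n : ℕ} (s : Fin m → ℚ) (t : Fin n → ℚ) (u : Fin (m + n) → ℚ) : Prop :=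
  IsConcaveRearr (Fin.append s t) u

/- ### Auxiliary lemmas -/

lemma psum_eq_sum_filter {n : ℕ} (s : Fin n → ℚ) (j : ℕ) :
    psum s j = ∑ i ∈ univ.filter (fun i : Fin n => (i : ℕ) < j), s i := by
  rw [psum, Finset.sum_filter]

lemma filter_lt_eq_map {n k : ℕ} (h : k ≤ n) :
    (univ.filter (fun i : Fin n => (i : ℕ) < k)) = univ.map (Fin.castLEEmb h) := by
  ext x
  simp only [mem_filter, mem_univ, true_and, mem_map, Fin.castLEEmb]
  constructor
  · intro hx
    exact ⟨⟨x.val, hx⟩, by simp [Fin.castLE, Fin.ext_iff]⟩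
  · rintro ⟨y, -, rfl⟩
    exact y.isLt

lemma psum_eq_castLE {n k : ℕ} (s : Fin n → ℚ) (h : k ≤ n) :
    psum s k = ∑ i : Fin k, s (Fin.castLE h i) := by
  rw [psum_eq_sum_filter, filter_lt_eq_map h, Finset.sum_map]
  rfl

lemma psum_zero {n : ℕ} (s : Fin n → ℚ) : psum s 0 = 0 := by
  simp [psum]

lemma bruhat_psum_le {n : ℕ} {s t : Fin n → ℚ} (h : BruhatGE s t) {a : ℕ} (ha : a ≤ n) :
    psum t a ≤ psum s a := by
  rcases Nat.eq_zero_or_pos a with rfl | hpos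
  · simp [psum_zero]
  · exact h.1 a hpos ha

lemma orderEmb_le_apply {k n : ℕ} (f : Fin k ↪o Fin n) (i : Fin k) :
    (i : ℕ) ≤ (f i : ℕ) := by
  rcases i with ⟨a, ha⟩
  induction a with
  | zero => exact Nat.zero_le _
  | succ a ih =>
    have ha' : a < k := Nat.lt_of_succ_lt ha
    have h1 : (f ⟨a, ha'⟩ : ℕ) < (f ⟨a + 1, ha⟩ : ℕ) := by
      have := f.strictMono (show (⟨a, ha'⟩ : Fin k) < ⟨a + 1, ha⟩ by
        simp [Fin.lt_def])
      exact this
    have := ih ha'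
    have hv1 : ((⟨a, ha'⟩ : Fin k) : ℕ) = a := rfl
    have hv2 : ((⟨a + 1, ha⟩ : Fin k) : ℕ) = a + 1 := rfl
    omega

/-- For an antitone `s`, the sum over any set `A` is at most the sum of the
first `A.card` values. -/
lemma sum_le_psum {n : ℕ} {s : Fin n → ℚ} (hs : Antitone s) (A : Finset (Fin n)) :
    ∑ i ∈ A, s i ≤ psum s A.card := by
  set k := A.card with hk
  have hkn : k ≤ n := by
    simpa using A.card_le_univ
  have hAmap : A = univ.map (A.orderEmbOfFin hk.symm).toEmbedding := by
    ext x
    simp only [mem_map, mem_univ, true_and, RelEmbedding.coe_toEmbedding]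
    constructor
    · intro hx
      have : x ∈ Set.range (A.orderEmbOfFin hk.symm) := by
        rw [Finset.range_orderEmbOfFin]; exact hx
      obtain ⟨y, hy⟩ := this
      exact ⟨y, hy⟩
    · rintro ⟨y, rfl⟩
      exact Finset.orderEmbOfFin_mem A hk.symm y
  rw [hAmap, Finset.sum_map, psum_eq_castLE s hkn]
  apply Finset.sum_le_sum
  intro i _
  apply hs
  rw [Fin.le_def]
  simpa using orderEmb_le_apply (A.orderEmbOfFin hk.symm) i

lemma append_eq_sum_elim {m n : ℕ} (s : Fin m → ℚ) (t : Fin n → ℚ) (i : Fin (m + n)) :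
    Fin.append s t i = Sum.elim s t (finSumFinEquiv.symm i) := by
  induction i using Fin.addCases with
  | left i => simp [Fin.append_left, finSumFinEquiv_symm_apply_castAdd]
  | right i => simp [Fin.append_right, finSumFinEquiv_symm_apply_natAdd]

/-- Lower bound: any split partial sum is at most the sorted partial sum. -/
lemma psum_add_le {m n : ℕ} (s : Fin m → ℚ) (t : Fin n → ℚ) (u : Fin (m + n) → ℚ)
    (σ : Equiv.Perm (Fin (m + n))) (huσ : u = Fin.append s t ∘ σ) (hu : Antitone u)
    {a b : ℕ} (ha : a ≤ m) (hb : b ≤ n) :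
    psum s a + psum t b ≤ psum u (a + b) := by
  classical
  set A : Finset (Fin m) := univ.filter (fun i : Fin m => (i : ℕ) < a) with hA
  set B : Finset (Fin n) := univ.filter (fun i : Fin n => (i : ℕ) < b) with hB
  have hcardA : A.card = a := by
    rw [hA, filter_lt_eq_map ha, Finset.card_map, Finset.card_univ, Fintype.card_fin]
  have hcardB : B.card = b := by
    rw [hB, filter_lt_eq_map hb, Finset.card_map, Finset.card_univ, Fintype.card_fin]
  set S : Finset (Fin (m + n)) :=
    A.map (Fin.castAddEmb n) ∪ B.map (Fin.natAddEmb m) with hS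
  have hltm : ∀ x ∈ A.map (Fin.castAddEmb n), (x : ℕ) < m := by
    intro x hx
    rw [Finset.mem_map] at hx
    obtain ⟨y, -, rfl⟩ := hx
    exact y.isLt
  have hgem : ∀ x ∈ B.map (Fin.natAddEmb m), m ≤ (x : ℕ) := by
    intro x hx
    rw [Finset.mem_map] at hx
    obtain ⟨z, -, rfl⟩ := hx
    exact Nat.le_add_right m z
  have hdisj : Disjoint (A.map (Fin.castAddEmb n)) (B.map (Fin.natAddEmb m)) := by
    rw [Finset.disjoint_left]
    intro x hx hx'
    have := hltm x hx
    have := hgem x hx'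
    omega
  have hcardS : S.card = a + b := by
    rw [hS, Finset.card_union_of_disjoint hdisj, Finset.card_map, Finset.card_map,
      hcardA, hcardB]
  have hsumS : ∑ i ∈ S, Fin.append s t i = psum s a + psum t b := by
    rw [hS, Finset.sum_union hdisj, Finset.sum_map, Finset.sum_map,
      psum_eq_sum_filter, psum_eq_sum_filter, ← hA, ← hB]
    congr 1
    · exact Finset.sum_congr rfl fun i _ => Fin.append_left s t i
    · exact Finset.sum_congr rfl fun i _ => Fin.append_right s t i
  have happ : ∀ i, Fin.append s t i = u (σ.symm i) := by
    intro i
    rw [huσ]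
    simp
  calc psum s a + psum t b = ∑ i ∈ S, Fin.append s t i := hsumS.symm
    _ = ∑ i ∈ S, u (σ.symm i) := by
        exact Finset.sum_congr rfl fun i _ => happ i
    _ = ∑ i ∈ S.image σ.symm, u i := by
        rw [Finset.sum_image (fun x _ y _ h => σ.symm.injective h)]
    _ ≤ psum u (S.image σ.symm).card := sum_le_psum hu _
    _ = psum u (a + b) := by
        rw [Finset.card_image_of_injective _ σ.symm.injective, hcardS]

/-- Upper bound: the sorted partial sum of a rearrangement of an append is at most
some split partial sum, provided the parts are antitone. -/
lemma psum_le_split {m n : ℕ} (s : Fin m → ℚ) (t : Fin n → ℚ)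
    (hs : Antitone s) (ht : Antitone t) (v : Fin (m + n) → ℚ)
    (σ : Equiv.Perm (Fin (m + n))) (hvσ : v = Fin.append s t ∘ σ)
    {j : ℕ} (hj : j ≤ m + n) :
    ∃ a b : ℕ, a ≤ m ∧ b ≤ n ∧ a + b = j ∧ psum v j ≤ psum s a + psum t b := by
  classical
  set T : Finset (Fin (m + n)) := univ.filter (fun i : Fin (m + n) => (i : ℕ) < j) with hT
  have hcardT : T.card = j := by
    rw [hT, filter_lt_eq_map hj, Finset.card_map, Finset.card_univ, Fintype.card_fin]
  set S : Finset (Fin (m + n)) := T.image σ with hSdef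
  have hcardS : S.card = j := by
    rw [hSdef, Finset.card_image_of_injective _ σ.injective, hcardT]
  set S' : Finset (Fin m ⊕ Fin n) := S.map finSumFinEquiv.symm.toEmbedding with hS'def
  have hcardS' : S'.card = j := by
    rw [hS'def, Finset.card_map, hcardS]
  refine ⟨S'.toLeft.card, S'.toRight.card, ?_, ?_, ?_, ?_⟩
  · simpa using S'.toLeft.card_le_univ
  · simpa using S'.toRight.card_le_univ
  · rw [Finset.card_toLeft_add_card_toRight, hcardS']
  · have h1 : psum v j = ∑ i ∈ S, Fin.append s t i := by
      rw [psum_eq_sum_filter, ← hT, hvσ]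
      rw [hSdef, Finset.sum_image (fun x _ y _ h => σ.injective h)]
      rfl
    have h2 : ∑ i ∈ S, Fin.append s t i = ∑ x ∈ S', Sum.elim s t x := by
      rw [hS'def, Finset.sum_map]
      exact Finset.sum_congr rfl fun i _ => append_eq_sum_elim s t i
    have h3 : ∑ x ∈ S', Sum.elim s t x
        = ∑ x ∈ S'.toLeft, s x + ∑ x ∈ S'.toRight, t x := by
      conv_lhs => rw [← Finset.toLeft_disjSum_toRight (u := S')]
      rw [Finset.sum_sumElim]
    rw [h1, h2, h3]
    exact add_le_add (sum_le_psum hs _) (sum_le_psum ht _)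

lemma sum_append {m n : ℕ} (s : Fin m → ℚ) (t : Fin n → ℚ) :
    ∑ i, Fin.append s t i = ∑ i, s i + ∑ i, t i := by
  rw [Fin.sum_univ_add]
  simp [Fin.append_left, Fin.append_right]

/-- Direct sums of concave rationally tuplar polygons preserve the Bruhat order. -/
theorem dsum_mono_bruhat {m n : ℕ} (p p' : Fin m → ℚ) (q q' : Fin n → ℚ)
    (hp : Antitone p) (hp' : Antitone p') (hq : Antitone q) (hq' : Antitone q')
    (h1 : BruhatGE p p') (h2 : BruhatGE q q')
    (u v : Fin (m + n) → ℚ) (hu : IsDSum p q u) (hv : IsDSum p' q' v) :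
    BruhatGE u v := by
  obtain ⟨⟨σ, huσ⟩, humono⟩ := hu
  obtain ⟨⟨τ, hvτ⟩, hvmono⟩ := hv
  constructor
  · intro j hj1 hjmn
    obtain ⟨a, b, ha, hb, hab, hle⟩ := psum_le_split p' q' hp' hq' v τ hvτ hjmn
    calc psum v j ≤ psum p' a + psum q' b := hle
      _ ≤ psum p a + psum q b :=
          add_le_add (bruhat_psum_le h1 ha) (bruhat_psum_le h2 hb)
      _ ≤ psum u (a + b) := psum_add_le p q u σ huσ humono ha hb
      _ = psum u j := by rw [hab]
  · have hsu : ∑ i, u i = ∑ i, p i + ∑ i, q i := by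
      rw [huσ]
      rw [show ∑ i, (Fin.append p q ∘ σ) i = ∑ i, Fin.append p q (σ i) from rfl,
        Equiv.sum_comp σ (Fin.append p q), sum_append]
    have hsv : ∑ i, v i = ∑ i, p' i + ∑ i, q' i := by
      rw [hvτ]
      rw [show ∑ i, (Fin.append p' q' ∘ τ) i = ∑ i, Fin.append p' q' (τ i) from rfl,
        Equiv.sum_comp τ (Fin.append p' q'), sum_append]
    rw [hsu, hsv, h1.2, h2.2]
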